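/- In an A-group G, for all x, y, w ∈ G: if x ⊂ wx, y ⊂ wx and y ∩ w = 1, then y ⊂ x. -/

import Mathlib

namespace ArtinMedian

/-- A median group, presented via a meet-semilattice operation `∩` (with induced
order `x ⊂ y ↔ x ∩ y = x`) satisfying: (1) `1 ⊂ x`; (2) `x ⊂ y → y ⊂ z →
z⁻¹y ⊂ z⁻¹x`; (3) `x⁻¹(x ∩ y) ⊂ x⁻¹y`. -/
class MedianGroup (G : Type*) extends Group G where
  meet : G → G → G
  meet_comm : ∀ x y, meet x y = meet y x
  meet_assoc : ∀ x y z, meet (meet x y) z = meet x (meet y z)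
  meet_idem : ∀ x, meet x x = x
  one_meet : ∀ x, meet 1 x = 1
  inv_mul_antitone : ∀ x y z, meet x y = x → meet y z = y →
    meet (z⁻¹ * y) (z⁻¹ * x) = z⁻¹ * y
  meet_axiom : ∀ x y, meet (x⁻¹ * meet x y) (x⁻¹ * y) = x⁻¹ * meet x y

namespace MedianGroup

variable {G : Type*} [MedianGroup G]

/-- The order `x ⊂ y` of a median group. -/
def sub (x y : G) : Prop := meet x y = x

/-- `j` is the join (least upper bound) `x ∪ y`. -/
def isJoin (x y j : G) : Prop :=
  sub x j ∧ sub y j ∧ ∀ c, sub x c → sub y c → sub j c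

/-- The join `x ∪ y` exists (`x ∪ y ≠ ∞`). -/
def hasJoin (x y : G) : Prop := ∃ j, isJoin x y j

/-- Orthogonality: `x ⊥ y` iff `x ∩ y = 1` and `x ∪ y` exists. -/
def orth (x y : G) : Prop := meet x y = 1 ∧ hasJoin x y

/-- `G` is a `⊥`-group: `x ⊥ y` implies `x ∪ y = xy`. -/
def PerpGroup (G : Type*) [MedianGroup G] : Prop :=
  ∀ x y : G, orth x y → isJoin x y (x * y)

/-- Axiom A₁: `x ∪ y` exists and `x⁻¹ ⊂ y⁻¹` imply `x ⊂ y`. -/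
def A1 (G : Type*) [MedianGroup G] : Prop :=
  ∀ x y : G, hasJoin x y → sub x⁻¹ y⁻¹ → sub x y

/-- Axiom A₂: `x ∩ y = x⁻¹ ∩ z = y⁻¹ ∩ z = 1` imply `xz ∩ yz ⊂ z`. -/
def A2 (G : Type*) [MedianGroup G] : Prop :=
  ∀ x y z : G, meet x y = 1 → meet x⁻¹ z = 1 → meet y⁻¹ z = 1 →
    sub (meet (x * z) (y * z)) z

/-- Axiom A₄: if `x ∪ x⁻¹` exists then `x = 1`. -/
def A4 (G : Type*) [MedianGroup G] : Prop :=
  ∀ x : G, hasJoin x x⁻¹ → x = 1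

/-- An A-group: a `⊥`-group satisfying A₁, A₂ and A₄. -/
def AGroup (G : Type*) [MedianGroup G] : Prop :=
  PerpGroup G ∧ A1 G ∧ A2 G ∧ A4 G

/-- The median of a median group: `Y(x,y,z) = x·((x⁻¹y) ∩ (x⁻¹z))`. -/
def medY (x y z : G) : G := x * meet (x⁻¹ * y) (x⁻¹ * z)

/-- The interval (cell) `[x,y]` of a median group. -/
def interval (x y : G) : Set G := {z | sub (x⁻¹ * z) (x⁻¹ * y)}

/-- Convexity of a subset of a median group. -/
def IsConvex (C : Set G) : Prop :=
  ∀ x y z : G, x ∈ C → y ∈ C → medY x z y ∈ C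

/-! ### Auxiliary order lemmas -/

lemma sub_refl' (a : G) : sub a a := meet_idem a

lemma sub_trans' {a b c : G} (h1 : sub a b) (h2 : sub b c) : sub a c := by
  unfold sub at *
  calc meet a c = meet (meet a b) c := by rw [h1]
    _ = meet a (meet b c) := meet_assoc a b c
    _ = meet a b := by rw [h2]
    _ = a := h1

lemma sub_antisymm' {a b : G} (h1 : sub a b) (h2 : sub b a) : a = b := by
  unfold sub at *
  rw [← h1, meet_comm, h2]

lemma one_sub' (a : G) : sub 1 a := one_meet a

lemma eq_one_of_sub_one {a : G} (h : sub a 1) : a = 1 := sub_antisymm' h (one_sub' a)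

lemma meet_sub_left' (a b : G) : sub (meet a b) a := by
  unfold sub
  rw [meet_comm (meet a b) a, ← meet_assoc, meet_idem]

lemma meet_sub_right' (a b : G) : sub (meet a b) b := by
  unfold sub
  rw [meet_assoc, meet_idem]

lemma sub_meet' {c a b : G} (h1 : sub c a) (h2 : sub c b) : sub c (meet a b) := by
  unfold sub at *
  rw [← meet_assoc, h1, h2]

/-- `b ⊂ c` implies `c⁻¹b ⊂ c⁻¹`. -/
lemma L2 {b c : G} (h : sub b c) : sub (c⁻¹ * b) c⁻¹ := by
  have := MedianGroup.inv_mul_antitone (1 : G) b c (one_meet b) h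
  simpa [sub] using this

/-- `c⁻¹b ⊂ c⁻¹` implies `b ⊂ c` (converse of `L2`). -/
lemma L2' {b c : G} (h : sub (c⁻¹ * b) c⁻¹) : sub b c := by
  have := L2 h
  simpa using this

/-- `a ⊂ b ⊂ c` implies `c⁻¹b ⊂ c⁻¹a`. -/
lemma L3 {a b c : G} (h1 : sub a b) (h2 : sub b c) : sub (c⁻¹ * b) (c⁻¹ * a) :=
  MedianGroup.inv_mul_antitone a b c h1 h2

/-- `a⁻¹ ∩ b = 1` implies `a ⊂ ab`. -/
lemma L1 {a b : G} (h : meet a⁻¹ b = 1) : sub a (a * b) := by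
  have := MedianGroup.meet_axiom (G := G) a⁻¹ b
  rw [h] at this
  simpa [sub] using this

/-- `a ⊂ ab` implies `a⁻¹ ∩ b = 1` (converse of `L1`). -/
lemma L1' {a b : G} (h : sub a (a * b)) : meet a⁻¹ b = 1 := by
  have hna : sub (meet a⁻¹ b) a⁻¹ := meet_sub_left' _ _
  have hnb : sub (meet a⁻¹ b) b := meet_sub_right' _ _
  -- `a·n ⊂ a`
  have h1 : sub (a * meet a⁻¹ b) a := by
    have := L2 hna
    simpa using this
  -- chain `a·n ⊂ a ⊂ a·b` gives `b⁻¹ ⊂ b⁻¹·n`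
  have h2 := L3 h1 h
  have e1 : (a * b)⁻¹ * a = b⁻¹ := by group
  have e2 : (a * b)⁻¹ * (a * meet a⁻¹ b) = b⁻¹ * meet a⁻¹ b := by group
  rw [e1, e2] at h2
  have h3 : sub (b⁻¹ * meet a⁻¹ b) b⁻¹ := L2 hnb
  have h4 : b⁻¹ * meet a⁻¹ b = b⁻¹ := sub_antisymm' h3 h2
  have : b⁻¹ * meet a⁻¹ b = b⁻¹ * 1 := by rw [mul_one, h4]
  exact mul_left_cancel this

/-! ### Joins from common upper bounds -/

/-- The median `Y(V,a,b)` of `1 ⊂ a,b ⊂ V` lies below `V`. -/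
lemma medY_sub {a b V : G} (ha : sub a V) (_hb : sub b V) : sub (medY V a b) V := by
  have hk : sub (meet (V⁻¹ * a) (V⁻¹ * b)) V⁻¹ :=
    sub_trans' (meet_sub_left' _ _) (L2 ha)
  apply L2'
  simpa [medY] using hk

lemma sub_medY_left {a b V : G} (ha : sub a V) (_hb : sub b V) : sub a (medY V a b) := by
  have h1 : sub (meet (V⁻¹ * a) (V⁻¹ * b)) (V⁻¹ * a) := meet_sub_left' _ _
  have h2 : sub (V⁻¹ * a) V⁻¹ := L2 ha
  have := L3 h1 h2
  simpa [medY] using this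

lemma sub_medY_right {a b V : G} (_ha : sub a V) (hb : sub b V) : sub b (medY V a b) := by
  have h1 : sub (meet (V⁻¹ * a) (V⁻¹ * b)) (V⁻¹ * b) := meet_sub_right' _ _
  have h2 : sub (V⁻¹ * b) V⁻¹ := L2 hb
  have := L3 h1 h2
  simpa [medY] using this

/-- If `a, b ⊂ U ⊂ V` then `Y(V,a,b) ⊂ U`. -/
lemma medY_sub_of_sub {a b U V : G} (ha : sub a U) (hb : sub b U) (hUV : sub U V) :
    sub (medY V a b) U := by
  have hq1 := L3 ha hUV
  have hq2 := L3 hb hUV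
  have hq : sub (V⁻¹ * U) (meet (V⁻¹ * a) (V⁻¹ * b)) := sub_meet' hq1 hq2
  have hk : sub (meet (V⁻¹ * a) (V⁻¹ * b)) V⁻¹ :=
    sub_trans' (meet_sub_left' _ _) (L2 (sub_trans' ha hUV))
  have := L3 hq hk
  simpa [medY] using this

/-- Any two elements with a common upper bound have a join, namely the median. -/
lemma isJoin_medY {a b V : G} (ha : sub a V) (hb : sub b V) :
    isJoin a b (medY V a b) := by
  refine ⟨sub_medY_left ha hb, sub_medY_right ha hb, ?_⟩
  intro v hav hbv
  have hU'a : sub a (meet (medY V a b) (medY v a b)) :=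
    sub_meet' (sub_medY_left ha hb) (sub_medY_left hav hbv)
  have hU'b : sub b (meet (medY V a b) (medY v a b)) :=
    sub_meet' (sub_medY_right ha hb) (sub_medY_right hav hbv)
  have hUV : sub (meet (medY V a b) (medY v a b)) V :=
    sub_trans' (meet_sub_left' _ _) (medY_sub ha hb)
  have h1 : sub (medY V a b) (meet (medY V a b) (medY v a b)) :=
    medY_sub_of_sub hU'a hU'b hUV
  exact sub_trans' (sub_trans' h1 (meet_sub_right' _ _)) (medY_sub hav hbv)

lemma hasJoin_of_bound {a b V : G} (ha : sub a V) (hb : sub b V) : hasJoin a b :=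
  ⟨_, isJoin_medY ha hb⟩

lemma isJoin_swap {a b j : G} (h : isJoin a b j) : isJoin b a j :=
  ⟨h.2.1, h.1, fun c hb ha => h.2.2 c ha hb⟩

lemma isJoin_unique {a b j1 j2 : G} (h1 : isJoin a b j1) (h2 : isJoin a b j2) :
    j1 = j2 :=
  sub_antisymm' (h1.2.2 _ h2.1 h2.2.1) (h2.2.2 _ h1.1 h1.2.1)

/-- Lemma 4.9: in an A-group, if `x ⊂ wx`, `y ⊂ wx` and
`y ∩ w = 1`, then `y ⊂ x`. -/
theorem sub_of_sub_mul {G : Type*} [MedianGroup G] (hG : AGroup G)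
    (x y w : G) (hx : sub x (w * x)) (hy : sub y (w * x))
    (hyw : meet y w = 1) : sub y x := by
  obtain ⟨hperp, hA1, _hA2, _hA4⟩ := hG
  -- `t := w ∩ wx`
  have htw : sub (meet w (w * x)) w := meet_sub_left' _ _
  have htwx : sub (meet w (w * x)) (w * x) := meet_sub_right' _ _
  -- `y ∩ t = 1`
  have hyt : meet y (meet w (w * x)) = 1 := by
    have h1 : sub (meet y (meet w (w * x))) (meet y w) :=
      sub_meet' (meet_sub_left' _ _) (sub_trans' (meet_sub_right' _ _) htw)
    rw [hyw] at h1
    exact eq_one_of_sub_one h1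
  -- `y ⊥ t`, hence `y·t = t·y` is the join of `y` and `t`
  have hJ : hasJoin y (meet w (w * x)) := hasJoin_of_bound hy htwx
  have hj1 : isJoin y (meet w (w * x)) (y * meet w (w * x)) := hperp _ _ ⟨hyt, hJ⟩
  have hJ2 : hasJoin (meet w (w * x)) y := ⟨_, isJoin_swap hj1⟩
  have hj2 : isJoin (meet w (w * x)) y (meet w (w * x) * y) :=
    hperp _ _ ⟨by rw [meet_comm, hyt], hJ2⟩
  have hcomm : y * meet w (w * x) = meet w (w * x) * y :=
    isJoin_unique hj1 (isJoin_swap hj2)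
  -- `t ⊂ y·t ⊂ wx` gives, via antitonicity, `y ⊂ t⁻¹·(wx)`
  have h1 : sub (meet w (w * x)) (y * meet w (w * x)) := hj1.2.1
  have h2 : sub (y * meet w (w * x)) (w * x) := hj1.2.2 _ hy htwx
  have h3 := L3 h1 h2
  have h4 : sub y ((meet w (w * x))⁻¹ * (w * x)) := by
    apply L2'
    have e1 : ((meet w (w * x))⁻¹ * (w * x))⁻¹ = (w * x)⁻¹ * meet w (w * x) := by
      group
    rw [e1, mul_assoc, ← hcomm]
    exact h3
  -- `s := w⁻¹·t ⊂ x`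
  have hs : sub (w⁻¹ * meet w (w * x)) x := by
    have h5 := MedianGroup.meet_axiom (G := G) w (w * x)
    have e : w⁻¹ * (w * x) = x := by group
    rw [e] at h5
    exact h5
  -- `y ⊂ s⁻¹·x`
  have h6 : sub y ((w⁻¹ * meet w (w * x))⁻¹ * x) := by
    have e : (w⁻¹ * meet w (w * x))⁻¹ * x = (meet w (w * x))⁻¹ * (w * x) := by
      group
    rw [e]
    exact h4
  -- hence `x⁻¹·(s·y) ⊂ x⁻¹·s ⊂ x⁻¹`
  have h7 : sub (x⁻¹ * (w⁻¹ * meet w (w * x) * y)) (x⁻¹ * (w⁻¹ * meet w (w * x))) := by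
    have h7' := L2 h6
    have e1 : ((w⁻¹ * meet w (w * x))⁻¹ * x)⁻¹ = x⁻¹ * (w⁻¹ * meet w (w * x)) := by
      group
    rw [e1] at h7'
    have e2 : x⁻¹ * (w⁻¹ * meet w (w * x)) * y = x⁻¹ * (w⁻¹ * meet w (w * x) * y) := by
      group
    rw [e2] at h7'
    exact h7'
  have h8 : sub (x⁻¹ * (w⁻¹ * meet w (w * x))) x⁻¹ := L2 hs
  have h9 : sub (x⁻¹ * (w⁻¹ * meet w (w * x) * y)) x⁻¹ := sub_trans' h7 h8
  -- so `s·y ⊂ x` and `s ⊂ s·y`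
  have h10 : sub (w⁻¹ * meet w (w * x) * y) x := L2' h9
  have h11 : sub (w⁻¹ * meet w (w * x)) (w⁻¹ * meet w (w * x) * y) := by
    have h11' := L3 h7 h8
    simpa [mul_assoc] using h11'
  -- hence `s⁻¹ ∩ y = 1`, so `y⁻¹ ⊂ y⁻¹·s⁻¹ = (s·y)⁻¹`
  have h12 : meet (w⁻¹ * meet w (w * x))⁻¹ y = 1 := L1' h11
  have h14 : sub y⁻¹ (y⁻¹ * (w⁻¹ * meet w (w * x))⁻¹) := by
    apply L1
    rw [inv_inv, meet_comm]
    exact h12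
  -- A₁ gives `y ⊂ s·y ⊂ x`
  have h15 : hasJoin y (w⁻¹ * meet w (w * x) * y) :=
    hasJoin_of_bound hy (sub_trans' h10 hx)
  have h16 : sub y (w⁻¹ * meet w (w * x) * y) := by
    apply hA1 _ _ h15
    rw [mul_inv_rev]
    exact h14
  exact sub_trans' h16 h10

end MedianGroup
end ArtinMedian
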